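/- arXiv:1509.06015 — 2 statements merged into one kernel-verified Lean document; each statement's English description precedes it below -/
import Mathlib

section
/- Let ρ, ψ ∈ L^∞(ℝ^d) with ρ, ψ ≥ 0 and ‖ρ‖_{L^∞}, ‖ψ‖_{L^∞} ≤ M. Then for every x ∈ ℝ^d, (1/2) ∫∫ c₁(y,z;x) | exp(−∫ φ₁(x−u) ρ(u) du) ρ(y) ρ(z) − exp(−∫ φ₁(x−u) ψ(u) du) ψ(y) ψ(z) | dy dz ≤ (1/2) ⟨c₁⟩ ( 2M + ⟨φ₁⟩ M² ) ‖ρ − ψ‖_{L^∞}. -/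
open MeasureTheory Set

noncomputable section

/-- Euclidean space `ℝ^d`, modeled as functions `Fin d → ℝ`. -/
abbrev Rd (d : ℕ) := Fin d → ℝ

/-- The (sup) `L^∞` norm of a function on `ℝ^d`. -/
def linf {d : ℕ} (f : Rd d → ℝ) : ℝ := ⨆ x, |f x|

/-- Membership in `L^∞(ℝ^d)`: measurable and (everywhere) bounded. -/
def MemLinf {d : ℕ} (f : Rd d → ℝ) : Prop := Measurable f ∧ ∃ M : ℝ, ∀ x, |f x| ≤ M

/-- `h(ρ,x) = (1/2) ∬ (c₁(x,y;z)+c₁(y,x;z)) ρ(y) dy dz + ⟨c₂⟩`. -/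
def hker {d : ℕ} (c₁ : Rd d → Rd d → Rd d → ℝ) (C2 : ℝ) (ρ : Rd d → ℝ) (x : Rd d) : ℝ :=
  1/2 * (∫ y, ∫ z, (c₁ x y z + c₁ y x z) * ρ y) + C2

/-- `R₂(ρ,x)`, the positive part of the right-hand side of the kinetic equation. -/
def R2 {d : ℕ} (c₁ : Rd d → Rd d → Rd d → ℝ) (c₂ : Rd d → Rd d → ℝ)
    (φ₁ φ₂ : Rd d → ℝ) (ρ : Rd d → ℝ) (x : Rd d) : ℝ :=
  1/2 * (∫ y, ∫ z, c₁ y z x * Real.exp (-∫ u, φ₁ (x - u) * ρ u) * ρ y * ρ z)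
    + 1/2 * (∫ y, ∫ z, (c₁ x y z + c₁ y x z) *
        (1 - Real.exp (-∫ u, φ₁ (z - u) * ρ u)) * ρ x * ρ y)
    + (∫ y, c₂ y x * Real.exp (-∫ u, φ₂ (x - u) * ρ u) * ρ y)
    + (∫ y, c₂ x y * (1 - Real.exp (-∫ u, φ₂ (y - u) * ρ u)) * ρ x)

/-- The fixed point map `F` given by the right-hand side of the integral equation. -/
def Fmap {d : ℕ} (c₁ : Rd d → Rd d → Rd d → ℝ) (c₂ : Rd d → Rd d → ℝ)
    (φ₁ φ₂ : Rd d → ℝ) (C2 : ℝ) (ρ₀ : Rd d → ℝ) (ρ : ℝ → Rd d → ℝ) (t : ℝ) (x : Rd d) : ℝ :=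
  ρ₀ x * Real.exp (-∫ s in (0:ℝ)..t, hker c₁ C2 (ρ s) x)
    + ∫ s in (0:ℝ)..t, R2 c₁ c₂ φ₁ φ₂ (ρ s) x * Real.exp (-∫ σ in s..t, hker c₁ C2 (ρ σ) x)

/-- The weighted norm `‖ρ‖_{T,γ} = sup_{t∈[0,T]} e^{-γ⟨c₂⟩t} ‖ρ_t‖_{L^∞}`. -/
def normTg {d : ℕ} (T γ C2 : ℝ) (ρ : ℝ → Rd d → ℝ) : ℝ :=
  ⨆ t : Icc (0:ℝ) T, Real.exp (-(γ * C2 * t.1)) * linf (ρ t.1)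

/-- Continuity on `S ⊆ ℝ` of a curve of functions, in the `L^∞` norm. -/
def LinfContOn {d : ℕ} (S : Set ℝ) (ρ : ℝ → Rd d → ℝ) : Prop :=
  ∀ t ∈ S, ∀ ε > 0, ∃ δ > 0, ∀ s ∈ S, |s - t| < δ → linf (fun x => ρ s x - ρ t x) < ε

/-- Membership in the ball `B_{T,γ}(r) ⊆ C([0,T] → L^∞)`. -/
def memB {d : ℕ} (T γ C2 r : ℝ) (ρ : ℝ → Rd d → ℝ) : Prop :=
  LinfContOn (Icc 0 T) ρ ∧ (∀ t ∈ Icc (0:ℝ) T, MemLinf (ρ t)) ∧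
    (∀ t ∈ Icc (0:ℝ) T, ∀ x, 0 ≤ ρ t x) ∧ normTg T γ C2 ρ ≤ r

/-- Differentiability at `t` (within `S ⊆ ℝ`) of a curve, in the `L^∞` norm,
with derivative `g`. -/
def HasLinfDerivWithinAt {d : ℕ} (ρ : ℝ → Rd d → ℝ) (g : Rd d → ℝ) (S : Set ℝ) (t : ℝ) : Prop :=
  ∀ ε > 0, ∃ δ > 0, ∀ s ∈ S, |s - t| < δ →
    linf (fun x => ρ s x - ρ t x - (s - t) * g x) ≤ ε * |s - t|

/-- The right-hand side of the kinetic equation: `−ρ(x) h(ρ,x) + R₂(ρ,x)`. -/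
def kderiv {d : ℕ} (c₁ : Rd d → Rd d → Rd d → ℝ) (c₂ : Rd d → Rd d → ℝ)
    (φ₁ φ₂ : Rd d → ℝ) (C2 : ℝ) (ρ : Rd d → ℝ) : Rd d → ℝ :=
  fun x => -(ρ x) * hker c₁ C2 ρ x + R2 c₁ c₂ φ₁ φ₂ ρ x

/-- `ρ` is a (local) classical solution of the kinetic equation on `[0,T]` with initial
value `ρ₀`: nonnegative and `L^∞`-valued, continuously differentiable in the `L^∞` norm,
and satisfying `d/dt ρ_t = −ρ_t·h(ρ_t,·) + R₂(ρ_t,·)`, `ρ_0 = ρ₀`. -/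
def IsSol {d : ℕ} (c₁ : Rd d → Rd d → Rd d → ℝ) (c₂ : Rd d → Rd d → ℝ)
    (φ₁ φ₂ : Rd d → ℝ) (C2 : ℝ) (ρ₀ : Rd d → ℝ) (T : ℝ) (ρ : ℝ → Rd d → ℝ) : Prop :=
  (∀ t ∈ Icc (0:ℝ) T, MemLinf (ρ t)) ∧ (∀ t ∈ Icc (0:ℝ) T, ∀ x, 0 ≤ ρ t x) ∧
    ρ 0 = ρ₀ ∧
    (∀ t ∈ Icc (0:ℝ) T, HasLinfDerivWithinAt ρ (kderiv c₁ c₂ φ₁ φ₂ C2 (ρ t)) (Icc 0 T) t) ∧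
    LinfContOn (Icc 0 T) (fun t => kderiv c₁ c₂ φ₁ φ₂ C2 (ρ t))

lemma exp_neg_lip (a b : ℝ) (ha : 0 ≤ a) (hb : 0 ≤ b) :
    |Real.exp (-a) - Real.exp (-b)| ≤ |a - b| := by
  wlog h : b ≤ a generalizing a b
  · rw [abs_sub_comm, abs_sub_comm a b]; exact this b a hb ha (le_of_not_ge h)
  rw [abs_of_nonpos (sub_nonpos.2 (Real.exp_le_exp.2 (neg_le_neg h))),
    abs_of_nonneg (sub_nonneg.2 h)]
  have h1 : Real.exp (-a) = Real.exp (-b) * Real.exp (-(a-b)) := by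
    rw [← Real.exp_add]; ring_nf
  have h2 : -(a-b) + 1 ≤ Real.exp (-(a-b)) := Real.add_one_le_exp _
  have h3 : Real.exp (-(a-b)) ≤ 1 := Real.exp_le_one_iff.2 (by linarith)
  have h4 : Real.exp (-b) ≤ 1 := Real.exp_le_one_iff.2 (by linarith)
  nlinarith [Real.exp_pos (-b), Real.exp_pos (-(a-b))]

theorem statement9 {d : ℕ} (hd : 1 ≤ d)
    (c₁ : Rd d → Rd d → Rd d → ℝ) (C1 : ℝ)
    (hc₁meas : Measurable fun p : Rd d × Rd d × Rd d => c₁ p.1 p.2.1 p.2.2)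
    (hc₁nn : ∀ x y z, 0 ≤ c₁ x y z)
    (hc₁sym : ∀ x y z, c₁ x y z = c₁ y x z)
    (hc₁int₁₂ : ∀ z, Integrable fun p : Rd d × Rd d => c₁ p.1 p.2 z)
    (hc₁int₁₃ : ∀ y, Integrable fun p : Rd d × Rd d => c₁ p.1 y p.2)
    (hc₁int₂₃ : ∀ x, Integrable fun p : Rd d × Rd d => c₁ x p.1 p.2)
    (hc₁val₁₂ : ∀ z, (∫ x, ∫ y, c₁ x y z) = C1)
    (hc₁val₁₃ : ∀ y, (∫ x, ∫ z, c₁ x y z) = C1)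
    (hc₁val₂₃ : ∀ x, (∫ y, ∫ z, c₁ x y z) = C1)
    (φ₁ : Rd d → ℝ) (Φ₁ : ℝ) (hφ₁meas : Measurable φ₁) (hφ₁nn : ∀ u, 0 ≤ φ₁ u)
    (hφ₁int : Integrable φ₁) (hφ₁val : (∫ u, φ₁ u) = Φ₁)
    (ρ ψ : Rd d → ℝ) (hρmem : MemLinf ρ) (hρnn : ∀ x, 0 ≤ ρ x)
    (hψmem : MemLinf ψ) (hψnn : ∀ x, 0 ≤ ψ x)
    (M : ℝ) (hρM : linf ρ ≤ M) (hψM : linf ψ ≤ M) (x : Rd d) :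
    1/2 * (∫ y, ∫ z, c₁ y z x * |Real.exp (-∫ u, φ₁ (x - u) * ρ u) * ρ y * ρ z
        - Real.exp (-∫ u, φ₁ (x - u) * ψ u) * ψ y * ψ z|)
      ≤ 1/2 * C1 * (2 * M + Φ₁ * M^2) * linf (fun u => ρ u - ψ u) := by
  obtain ⟨hρmeas, Mρ, hMρ⟩ := hρmem
  obtain ⟨hψmeas, Mψ, hMψ⟩ := hψmem
  set K := linf (fun u => ρ u - ψ u) with hKdef
  have hK0 : 0 ≤ K := Real.iSup_nonneg fun u => abs_nonneg _
  have hKbdd : BddAbove (Set.range fun u => |ρ u - ψ u|) := by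
    refine ⟨Mρ + Mψ, ?_⟩
    rintro - ⟨u, rfl⟩
    exact (abs_sub _ _).trans (add_le_add (hMρ u) (hMψ u))
  have hK : ∀ u, |ρ u - ψ u| ≤ K := fun u => le_ciSup hKbdd u
  have hρle : ∀ u, |ρ u| ≤ M := fun u =>
    (le_ciSup (f := fun u => |ρ u|) ⟨Mρ, by rintro - ⟨u, rfl⟩; exact hMρ u⟩ u).trans hρM
  have hψle : ∀ u, |ψ u| ≤ M := fun u =>
    (le_ciSup (f := fun u => |ψ u|) ⟨Mψ, by rintro - ⟨u, rfl⟩; exact hMψ u⟩ u).trans hψM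
  have hM0 : 0 ≤ M := le_trans (abs_nonneg _) (hρle x)
  have hΦ0 : 0 ≤ Φ₁ := hφ₁val ▸ integral_nonneg hφ₁nn
  -- integrability of the tail integrands
  have hφx : Integrable (fun u : Rd d => φ₁ (x - u)) := hφ₁int.comp_sub_left x
  have hφxmeas : Measurable (fun u : Rd d => φ₁ (x - u)) :=
    hφ₁meas.comp (measurable_const.sub measurable_id)
  have Iρ : Integrable (fun u : Rd d => φ₁ (x - u) * ρ u) := by
    have := hφx.bdd_mul hρmeas.aestronglyMeasurable (c := M) (Filter.Eventually.of_forall fun u => by simpa using hρle u)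
    simpa [mul_comm] using this
  have Iψ : Integrable (fun u : Rd d => φ₁ (x - u) * ψ u) := by
    have := hφx.bdd_mul hψmeas.aestronglyMeasurable (c := M) (Filter.Eventually.of_forall fun u => by simpa using hψle u)
    simpa [mul_comm] using this
  set a := ∫ u, φ₁ (x - u) * ρ u with hadef
  set b := ∫ u, φ₁ (x - u) * ψ u with hbdef
  have hab : |a - b| ≤ Φ₁ * K := by
    rw [hadef, hbdef, ← integral_sub Iρ Iψ]
    calc |∫ u, (φ₁ (x - u) * ρ u - φ₁ (x - u) * ψ u)|
        ≤ ∫ u, |φ₁ (x - u) * ρ u - φ₁ (x - u) * ψ u| := by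
          simpa [Real.norm_eq_abs] using
            norm_integral_le_integral_norm (fun u => φ₁ (x - u) * ρ u - φ₁ (x - u) * ψ u)
      _ ≤ ∫ u, φ₁ (x - u) * K := by
          refine integral_mono (Iρ.sub Iψ).abs (hφx.mul_const K) fun u => ?_
          rw [← mul_sub, abs_mul, abs_of_nonneg (hφ₁nn _)]
          exact mul_le_mul_of_nonneg_left (hK u) (hφ₁nn _)
      _ = Φ₁ * K := by
          rw [integral_mul_const, integral_sub_left_eq_self φ₁ volume x, hφ₁val]
  -- pointwise bound on the absolute difference
  have key : ∀ y z : Rd d,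
      |Real.exp (-a) * ρ y * ρ z - Real.exp (-b) * ψ y * ψ z|
        ≤ (2 * M + Φ₁ * M ^ 2) * K := by
    intro y z
    have ea1 : Real.exp (-a) ≤ 1 :=
      Real.exp_le_one_iff.2 (neg_nonpos.2 (integral_nonneg fun u =>
        mul_nonneg (hφ₁nn _) (hρnn u)))
    have ea0 : 0 ≤ Real.exp (-a) := (Real.exp_pos _).le
    have hprod : |ρ y * ρ z - ψ y * ψ z| ≤ 2 * M * K := by
      have : ρ y * ρ z - ψ y * ψ z = (ρ y - ψ y) * ρ z + ψ y * (ρ z - ψ z) := by ring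
      rw [this]
      calc |(ρ y - ψ y) * ρ z + ψ y * (ρ z - ψ z)|
          ≤ |(ρ y - ψ y) * ρ z| + |ψ y * (ρ z - ψ z)| := abs_add_le _ _
        _ = |ρ y - ψ y| * |ρ z| + |ψ y| * |ρ z - ψ z| := by rw [abs_mul, abs_mul]
        _ ≤ K * M + M * K := add_le_add
            (mul_le_mul (hK y) (hρle z) (abs_nonneg _) hK0)
            (mul_le_mul (hψle y) (hK z) (abs_nonneg _) hM0)
        _ = 2 * M * K := by ring
    have hexp : |Real.exp (-a) - Real.exp (-b)| ≤ Φ₁ * K := (exp_neg_lip a b (integral_nonneg fun u => mul_nonneg (hφ₁nn _) (hρnn u)) (integral_nonneg fun u => mul_nonneg (hφ₁nn _) (hψnn u))).trans hab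
    have hψprod : ψ y * ψ z ≤ M ^ 2 := by
      have h1 := (abs_le.1 (hψle y)).2
      have h2 := (abs_le.1 (hψle z)).2
      nlinarith [hψnn y, hψnn z]
    calc |Real.exp (-a) * ρ y * ρ z - Real.exp (-b) * ψ y * ψ z|
        = |Real.exp (-a) * (ρ y * ρ z - ψ y * ψ z)
            + (Real.exp (-a) - Real.exp (-b)) * (ψ y * ψ z)| := by ring_nf
      _ ≤ |Real.exp (-a) * (ρ y * ρ z - ψ y * ψ z)|
            + |(Real.exp (-a) - Real.exp (-b)) * (ψ y * ψ z)| := abs_add_le _ _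
      _ = Real.exp (-a) * |ρ y * ρ z - ψ y * ψ z|
            + |Real.exp (-a) - Real.exp (-b)| * (ψ y * ψ z) := by
          rw [abs_mul, abs_mul, abs_of_nonneg ea0,
            abs_of_nonneg (mul_nonneg (hψnn y) (hψnn z))]
      _ ≤ 1 * (2 * M * K) + (Φ₁ * K) * M ^ 2 := add_le_add
          (mul_le_mul ea1 hprod (abs_nonneg _) zero_le_one)
          (mul_le_mul hexp hψprod (mul_nonneg (hψnn y) (hψnn z))
            (mul_nonneg hΦ0 hK0))
      _ = (2 * M + Φ₁ * M ^ 2) * K := by ring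
  set B := (2 * M + Φ₁ * M ^ 2) * K with hBdef
  have hB0 : 0 ≤ B := mul_nonneg (by positivity) hK0
  -- integrability of c₁ with third argument x
  have hc₁x : Integrable (fun p : Rd d × Rd d => c₁ p.1 p.2 x)
      ((volume : Measure (Rd d)).prod volume) := by
    have := hc₁int₁₂ x
    rwa [← MeasureTheory.Measure.volume_eq_prod]
  have hinner : Integrable (fun y => ∫ z, c₁ y z x) := hc₁x.integral_prod_left
  have hzae : ∀ᵐ y : Rd d, Integrable (fun z => c₁ y z x) := hc₁x.prod_right_ae
  -- bound the iterated integral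
  have hmain : (∫ y, ∫ z, c₁ y z x *
      |Real.exp (-a) * ρ y * ρ z - Real.exp (-b) * ψ y * ψ z|) ≤ C1 * B := by
    calc (∫ y, ∫ z, c₁ y z x *
        |Real.exp (-a) * ρ y * ρ z - Real.exp (-b) * ψ y * ψ z|)
        ≤ ∫ y, B * ∫ z, c₁ y z x := by
          refine integral_mono_of_nonneg ?_ (hinner.const_mul B) ?_
          · filter_upwards with y
            exact integral_nonneg fun z => mul_nonneg (hc₁nn _ _ _) (abs_nonneg _)
          · filter_upwards [hzae] with y hy
            rw [← integral_const_mul]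
            refine integral_mono_of_nonneg ?_ (hy.const_mul B) ?_
            · filter_upwards with z
              exact mul_nonneg (hc₁nn _ _ _) (abs_nonneg _)
            · filter_upwards with z
              rw [mul_comm B]
              exact mul_le_mul_of_nonneg_left (key y z) (hc₁nn _ _ _)
      _ = B * C1 := by rw [integral_const_mul, hc₁val₁₂ x]
      _ = C1 * B := mul_comm _ _
  calc 1/2 * (∫ y, ∫ z, c₁ y z x *
      |Real.exp (-a) * ρ y * ρ z - Real.exp (-b) * ψ y * ψ z|)
      ≤ 1/2 * (C1 * B) := by linarith [hmain]
    _ = 1/2 * C1 * (2 * M + Φ₁ * M^2) * K := by rw [hBdef]; ring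
end
end

section
/- Let r, γ, T* > 0, let ρ₀ ∈ L^∞(ℝ^d) with ρ₀ ≥ 0 and ‖ρ₀‖_{L^∞} ≤ r, and let ρ, ψ ∈ B_{T*,γ}(r). Then for all t ∈ [0, T*] and x ∈ ℝ^d, | ρ₀(x) [ exp(−∫₀ᵗ h(ρ_s, x) ds) − exp(−∫₀ᵗ h(ψ_s, x) ds) ] | ≤ r ⟨c₁⟩ t e^{γ⟨c₂⟩t} ‖ρ − ψ‖_{T*,γ}. -/
open MeasureTheory Set

noncomputable section

-- aux lemmas
lemma linf_nonneg {d : ℕ} (f : Rd d → ℝ) : 0 ≤ linf f :=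
  Real.iSup_nonneg fun x => abs_nonneg _

lemma abs_le_linf {d : ℕ} {f : Rd d → ℝ} (hb : ∃ M, ∀ x, |f x| ≤ M) (x : Rd d) :
    |f x| ≤ linf f := by
  obtain ⟨M, hM⟩ := hb
  exact le_ciSup ⟨M, by rintro _ ⟨y, rfl⟩; exact hM y⟩ x

lemma linf_le {d : ℕ} {f : Rd d → ℝ} {M : ℝ} (hM : ∀ x, |f x| ≤ M) : linf f ≤ M :=
  ciSup_le hM

lemma exp_neg_sub_abs_le {a b : ℝ} (ha : 0 ≤ a) (hb : 0 ≤ b) :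
    |Real.exp (-a) - Real.exp (-b)| ≤ |a - b| := by
  wlog hab : a ≤ b generalizing a b
  · rw [abs_sub_comm, abs_sub_comm a b]; exact this hb ha (le_of_not_ge hab)
  have key : Real.exp (-a) - Real.exp (-b) ≤ b - a := by
    have hE : Real.exp (-b) = Real.exp (-a) * Real.exp (-(b - a)) := by
      rw [← Real.exp_add]; ring_nf
    have h3 : 1 - (b - a) ≤ Real.exp (-(b - a)) := by
      have := Real.add_one_le_exp (-(b - a)); linarith
    have h1 : Real.exp (-a) ≤ 1 := Real.exp_le_one_iff.mpr (by linarith)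
    have h0 : 0 ≤ Real.exp (-a) := (Real.exp_pos _).le
    nlinarith [mul_le_mul_of_nonneg_left h3 h0]
  have hmono : Real.exp (-b) ≤ Real.exp (-a) := Real.exp_le_exp.mpr (by linarith)
  rw [abs_of_nonneg (by linarith), abs_of_nonpos (by linarith : a - b ≤ 0)]
  linarith

lemma hker_diff_bound {d : ℕ} (c₁ : Rd d → Rd d → Rd d → ℝ) (C1 C2 : ℝ)
    (hc₁meas : Measurable fun p : Rd d × Rd d × Rd d => c₁ p.1 p.2.1 p.2.2)
    (hc₁nn : ∀ x y z, 0 ≤ c₁ x y z)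
    (hc₁int₁₃ : ∀ y, Integrable fun p : Rd d × Rd d => c₁ p.1 y p.2)
    (hc₁int₂₃ : ∀ x, Integrable fun p : Rd d × Rd d => c₁ x p.1 p.2)
    (hc₁val₁₃ : ∀ y, (∫ x, ∫ z, c₁ x y z) = C1)
    (hc₁val₂₃ : ∀ x, (∫ y, ∫ z, c₁ x y z) = C1)
    (x : Rd d) (f g : Rd d → ℝ) (hf : MemLinf f) (hg : MemLinf g)
    (D : ℝ) (hD : ∀ y, |f y - g y| ≤ D) :
    |hker c₁ C2 f x - hker c₁ C2 g x| ≤ C1 * D := by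
  set K : Rd d × Rd d → ℝ := fun p => c₁ x p.1 p.2 + c₁ p.1 x p.2 with hKdef
  have hKint : Integrable K := (hc₁int₂₃ x).add (hc₁int₁₃ x)
  have hKnn : ∀ p, 0 ≤ K p := fun p => add_nonneg (hc₁nn _ _ _) (hc₁nn _ _ _)
  have hKval : (∫ p, K p) = 2 * C1 := by
    rw [integral_add (hc₁int₂₃ x) (hc₁int₁₃ x)]
    have h1 : (∫ p : Rd d × Rd d, c₁ x p.1 p.2) = C1 := by
      have hi : Integrable (fun p : Rd d × Rd d => c₁ x p.1 p.2)
          ((volume : Measure (Rd d)).prod volume) := by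
        rw [← MeasureTheory.Measure.volume_eq_prod]; exact hc₁int₂₃ x
      rw [MeasureTheory.Measure.volume_eq_prod, MeasureTheory.integral_prod _ hi]
      exact hc₁val₂₃ x
    have h2 : (∫ p : Rd d × Rd d, c₁ p.1 x p.2) = C1 := by
      have hi : Integrable (fun p : Rd d × Rd d => c₁ p.1 x p.2)
          ((volume : Measure (Rd d)).prod volume) := by
        rw [← MeasureTheory.Measure.volume_eq_prod]; exact hc₁int₁₃ x
      rw [MeasureTheory.Measure.volume_eq_prod, MeasureTheory.integral_prod _ hi]
      exact hc₁val₁₃ x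
    rw [h1, h2]; ring
  have hint : ∀ (u : Rd d → ℝ), MemLinf u →
      Integrable (fun p : Rd d × Rd d => K p * u p.1) := by
    intro u hu
    have h : Integrable (fun p : Rd d × Rd d => u p.1 * K p) :=
      hKint.bdd_mul ((hu.1.comp measurable_fst).aestronglyMeasurable)
        (c := hu.2.choose) (Filter.Eventually.of_forall fun p => by
          simpa [Real.norm_eq_abs] using hu.2.choose_spec p.1)
    simpa [mul_comm] using h
  have heq : ∀ (u : Rd d → ℝ), MemLinf u →
      (∫ y, ∫ z, (c₁ x y z + c₁ y x z) * u y) = ∫ p : Rd d × Rd d, K p * u p.1 := by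
    intro u hu
    have hi : Integrable (fun p : Rd d × Rd d => K p * u p.1)
        ((volume : Measure (Rd d)).prod volume) := by
      rw [← MeasureTheory.Measure.volume_eq_prod]; exact hint u hu
    rw [MeasureTheory.Measure.volume_eq_prod, MeasureTheory.integral_prod _ hi]
  have hfg : MemLinf (fun y => f y - g y) := by
    refine ⟨hf.1.sub hg.1, ?_⟩
    obtain ⟨M1, hM1⟩ := hf.2; obtain ⟨M2, hM2⟩ := hg.2
    exact ⟨M1 + M2, fun y => (abs_sub _ _).trans (add_le_add (hM1 y) (hM2 y))⟩
  have hdiff : hker c₁ C2 f x - hker c₁ C2 g x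
      = 1/2 * ∫ p : Rd d × Rd d, K p * (f p.1 - g p.1) := by
    have hsub : (∫ p : Rd d × Rd d, K p * (f p.1 - g p.1))
        = (∫ p : Rd d × Rd d, K p * f p.1) - ∫ p : Rd d × Rd d, K p * g p.1 := by
      rw [← integral_sub (hint f hf) (hint g hg)]
      simp_rw [mul_sub]
    simp only [hker, heq f hf, heq g hg, hsub]; ring
  have hDnn : 0 ≤ D := le_trans (abs_nonneg _) (hD x)
  have hintfg : Integrable (fun p : Rd d × Rd d => K p * (f p.1 - g p.1)) := hint _ hfg
  have habs : |∫ p : Rd d × Rd d, K p * (f p.1 - g p.1)| ≤ 2 * C1 * D := by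
    have h1 : |∫ p : Rd d × Rd d, K p * (f p.1 - g p.1)|
        ≤ ∫ p : Rd d × Rd d, |K p| * |f p.1 - g p.1| := by
      simpa [Real.norm_eq_abs, abs_mul] using
        norm_integral_le_integral_norm (μ := (volume : Measure (Rd d × Rd d)))
          (fun p : Rd d × Rd d => K p * (f p.1 - g p.1))
    have h2 : (∫ p : Rd d × Rd d, |K p| * |f p.1 - g p.1|)
        ≤ ∫ p : Rd d × Rd d, K p * D := by
      refine integral_mono ?_ (hKint.mul_const D) fun p => ?_
      · have := hintfg.abs
        simpa [abs_mul] using this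
      · rw [abs_of_nonneg (hKnn p)]
        exact mul_le_mul_of_nonneg_left (hD p.1) (hKnn p)
    have h3 : (∫ p : Rd d × Rd d, K p * D) = 2 * C1 * D := by
      rw [integral_mul_const, hKval]
    linarith
  rw [hdiff, abs_mul]
  rw [abs_of_nonneg (by norm_num : (0:ℝ) ≤ 1/2)]
  linarith
lemma linf_bound_on_Icc {d : ℕ} {ρ : ℝ → Rd d → ℝ} {T : ℝ}
    (hc : LinfContOn (Icc 0 T) ρ) (hm : ∀ t ∈ Icc (0:ℝ) T, MemLinf (ρ t)) :
    ∃ B, ∀ t ∈ Icc (0:ℝ) T, linf (ρ t) ≤ B := by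
  have hdm : ∀ s ∈ Icc (0:ℝ) T, ∀ t ∈ Icc (0:ℝ) T,
      ∃ M, ∀ x, |ρ s x - ρ t x| ≤ M := by
    intro s hs t ht
    obtain ⟨M1, hM1⟩ := (hm s hs).2; obtain ⟨M2, hM2⟩ := (hm t ht).2
    exact ⟨M1 + M2, fun x => (abs_sub _ _).trans (add_le_add (hM1 x) (hM2 x))⟩
  have hcont : ContinuousOn (fun t => linf (ρ t)) (Icc 0 T) := by
    rw [Metric.continuousOn_iff]
    intro t ht ε hε
    obtain ⟨δ, hδ, hδ'⟩ := hc t ht ε hε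
    refine ⟨δ, hδ, fun s hs hst => ?_⟩
    rw [Real.dist_eq] at hst ⊢
    have hL := hδ' s hs hst
    have hkey : |linf (ρ s) - linf (ρ t)| ≤ linf (fun x => ρ s x - ρ t x) := by
      rw [abs_sub_le_iff]
      constructor
      · have h1 : linf (ρ s) ≤ linf (fun x => ρ s x - ρ t x) + linf (ρ t) := by
          refine ciSup_le fun x => ?_
          calc |ρ s x| = |(ρ s x - ρ t x) + ρ t x| := by ring_nf
            _ ≤ |ρ s x - ρ t x| + |ρ t x| := abs_add_le _ _
            _ ≤ linf (fun x => ρ s x - ρ t x) + linf (ρ t) :=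
                add_le_add (abs_le_linf (hdm s hs t ht) x) (abs_le_linf (hm t ht).2 x)
        linarith
      · have h1 : linf (ρ t) ≤ linf (fun x => ρ s x - ρ t x) + linf (ρ s) := by
          refine ciSup_le fun x => ?_
          calc |ρ t x| = |-(ρ s x - ρ t x) + ρ s x| := by ring_nf
            _ ≤ |-(ρ s x - ρ t x)| + |ρ s x| := abs_add_le _ _
            _ = |ρ s x - ρ t x| + |ρ s x| := by rw [abs_neg]
            _ ≤ linf (fun x => ρ s x - ρ t x) + linf (ρ s) :=
                add_le_add (abs_le_linf (hdm s hs t ht) x) (abs_le_linf (hm s hs).2 x)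
        linarith
    exact lt_of_le_of_lt hkey hL
  obtain ⟨B, hB⟩ := (isCompact_Icc.image_of_continuousOn hcont).bddAbove
  exact ⟨B, fun t ht => hB ⟨t, ht, rfl⟩⟩

theorem statement10 {d : ℕ} (hd : 1 ≤ d)
    (c₁ : Rd d → Rd d → Rd d → ℝ) (C1 : ℝ)
    (hc₁meas : Measurable fun p : Rd d × Rd d × Rd d => c₁ p.1 p.2.1 p.2.2)
    (hc₁nn : ∀ x y z, 0 ≤ c₁ x y z)
    (hc₁sym : ∀ x y z, c₁ x y z = c₁ y x z)
    (hc₁int₁₂ : ∀ z, Integrable fun p : Rd d × Rd d => c₁ p.1 p.2 z)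
    (hc₁int₁₃ : ∀ y, Integrable fun p : Rd d × Rd d => c₁ p.1 y p.2)
    (hc₁int₂₃ : ∀ x, Integrable fun p : Rd d × Rd d => c₁ x p.1 p.2)
    (hc₁val₁₂ : ∀ z, (∫ x, ∫ y, c₁ x y z) = C1)
    (hc₁val₁₃ : ∀ y, (∫ x, ∫ z, c₁ x y z) = C1)
    (hc₁val₂₃ : ∀ x, (∫ y, ∫ z, c₁ x y z) = C1)
    (c₂ : Rd d → Rd d → ℝ) (C2 : ℝ)
    (hc₂meas : Measurable fun p : Rd d × Rd d => c₂ p.1 p.2)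
    (hc₂nn : ∀ x y, 0 ≤ c₂ x y)
    (hc₂int₁ : ∀ y, Integrable fun x => c₂ x y)
    (hc₂int₂ : ∀ x, Integrable fun y => c₂ x y)
    (hc₂val₁ : ∀ y, (∫ x, c₂ x y) = C2)
    (hc₂val₂ : ∀ x, (∫ y, c₂ x y) = C2)
    (r γ T' : ℝ) (hr : 0 < r) (hγ : 0 < γ) (hT' : 0 < T')
    (ρ₀ : Rd d → ℝ) (hρ₀mem : MemLinf ρ₀) (hρ₀nn : ∀ x, 0 ≤ ρ₀ x)
    (hρ₀r : linf ρ₀ ≤ r)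
    (ρ ψ : ℝ → Rd d → ℝ) (hρ : memB T' γ C2 r ρ) (hψ : memB T' γ C2 r ψ) :
    ∀ t ∈ Icc (0:ℝ) T', ∀ x : Rd d,
      |ρ₀ x * (Real.exp (-∫ s in (0:ℝ)..t, hker c₁ C2 (ρ s) x)
          - Real.exp (-∫ s in (0:ℝ)..t, hker c₁ C2 (ψ s) x))|
        ≤ r * C1 * t * Real.exp (γ * C2 * t) * normTg T' γ C2 (fun t x => ρ t x - ψ t x) := by
  intro t ht x
  obtain ⟨ht0, htT⟩ := ht
  have hC2nn : 0 ≤ C2 := by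
    rw [← hc₂val₂ x]; exact integral_nonneg fun y => hc₂nn _ _
  have hC1nn : 0 ≤ C1 := by
    rw [← hc₁val₂₃ x]
    exact integral_nonneg fun y => integral_nonneg fun z => hc₁nn _ _ _
  obtain ⟨hρc, hρm, hρnn, -⟩ := hρ
  obtain ⟨hψc, hψm, hψnn, -⟩ := hψ
  have hdm : ∀ s ∈ Icc (0:ℝ) T', MemLinf (fun y => ρ s y - ψ s y) := by
    intro s hs
    obtain ⟨M1, hM1⟩ := (hρm s hs).2; obtain ⟨M2, hM2⟩ := (hψm s hs).2
    exact ⟨(hρm s hs).1.sub (hψm s hs).1,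
      M1 + M2, fun y => (abs_sub _ _).trans (add_le_add (hM1 y) (hM2 y))⟩
  obtain ⟨Bρ, hBρ⟩ := linf_bound_on_Icc hρc hρm
  obtain ⟨Bψ, hBψ⟩ := linf_bound_on_Icc hψc hψm
  have hbddN : BddAbove (range fun s : Icc (0:ℝ) T' =>
      Real.exp (-(γ * C2 * s.1)) * linf (fun y => ρ s.1 y - ψ s.1 y)) := by
    refine ⟨Bρ + Bψ, ?_⟩
    rintro _ ⟨⟨s, hs⟩, rfl⟩
    have hL : linf (fun y => ρ s y - ψ s y) ≤ Bρ + Bψ := by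
      refine (linf_le fun y => (abs_sub _ _).trans
        (add_le_add (abs_le_linf (hρm s hs).2 y) (abs_le_linf (hψm s hs).2 y))).trans ?_
      exact add_le_add (hBρ s hs) (hBψ s hs)
    have hexp : Real.exp (-(γ * C2 * s)) ≤ 1 :=
      Real.exp_le_one_iff.mpr (neg_nonpos.mpr (mul_nonneg (mul_nonneg hγ.le hC2nn) hs.1))
    calc Real.exp (-(γ * C2 * s)) * linf (fun y => ρ s y - ψ s y)
        ≤ 1 * linf (fun y => ρ s y - ψ s y) :=
          mul_le_mul_of_nonneg_right hexp (linf_nonneg _)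
      _ = linf (fun y => ρ s y - ψ s y) := one_mul _
      _ ≤ Bρ + Bψ := hL
  have hterm : ∀ s, s ∈ Icc (0:ℝ) T' →
      Real.exp (-(γ * C2 * s)) * linf (fun y => ρ s y - ψ s y)
        ≤ normTg T' γ C2 (fun t x => ρ t x - ψ t x) := by
    intro s hs
    have h := le_ciSup hbddN (⟨s, hs⟩ : Icc (0:ℝ) T')
    exact h
  have hNnn : 0 ≤ normTg T' γ C2 (fun t x => ρ t x - ψ t x) := by
    have h0 : (0:ℝ) ∈ Icc (0:ℝ) T' := ⟨le_rfl, hT'.le⟩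
    refine le_trans ?_ (hterm 0 h0)
    exact mul_nonneg (Real.exp_nonneg _) (linf_nonneg _)
  set N := normTg T' γ C2 (fun t x => ρ t x - ψ t x) with hN
  have hdiffD : ∀ s ∈ Icc (0:ℝ) T', ∀ y, |ρ s y - ψ s y| ≤ Real.exp (γ * C2 * s) * N := by
    intro s hs y
    have h1 : |ρ s y - ψ s y| ≤ linf (fun y => ρ s y - ψ s y) := abs_le_linf (hdm s hs).2 y
    have h2 := hterm s hs
    have h4 := mul_le_mul_of_nonneg_left h2 (Real.exp_nonneg (γ * C2 * s))
    rw [← mul_assoc, ← Real.exp_add] at h4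
    simp only [add_neg_cancel, Real.exp_zero, one_mul] at h4
    exact h1.trans h4
  have hkcont : ∀ (σ : ℝ → Rd d → ℝ), LinfContOn (Icc 0 T') σ →
      (∀ s ∈ Icc (0:ℝ) T', MemLinf (σ s)) →
      ContinuousOn (fun s => hker c₁ C2 (σ s) x) (Icc 0 T') := by
    intro σ hσc hσm
    rw [Metric.continuousOn_iff]
    intro u hu ε hε
    obtain ⟨δ, hδ, hδ'⟩ := hσc u hu (ε / (C1 + 1)) (by positivity)
    refine ⟨δ, hδ, fun s hs hst => ?_⟩
    rw [Real.dist_eq] at hst ⊢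
    have hdm' : ∃ M, ∀ y, |σ s y - σ u y| ≤ M := by
      obtain ⟨M1, hM1⟩ := (hσm s hs).2; obtain ⟨M2, hM2⟩ := (hσm u hu).2
      exact ⟨M1 + M2, fun y => (abs_sub _ _).trans (add_le_add (hM1 y) (hM2 y))⟩
    have hb := hker_diff_bound c₁ C1 C2 hc₁meas hc₁nn hc₁int₁₃ hc₁int₂₃ hc₁val₁₃ hc₁val₂₃
      x (σ s) (σ u) (hσm s hs) (hσm u hu) (linf (fun y => σ s y - σ u y))
      (fun y => abs_le_linf hdm' y)
    have hlt := hδ' s hs hst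
    calc |hker c₁ C2 (σ s) x - hker c₁ C2 (σ u) x|
        ≤ C1 * linf (fun y => σ s y - σ u y) := hb
      _ ≤ C1 * (ε / (C1 + 1)) := mul_le_mul_of_nonneg_left hlt.le hC1nn
      _ < ε := by
          have h5 : C1 * (ε / (C1 + 1)) < (C1 + 1) * (ε / (C1 + 1)) :=
            mul_lt_mul_of_pos_right (lt_add_one C1) (by positivity)
          have heq' : (C1 + 1) * (ε / (C1 + 1)) = ε := by field_simp
          linarith
  have hsub : Icc (0:ℝ) t ⊆ Icc (0:ℝ) T' := Icc_subset_Icc le_rfl htT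
  have hφi : IntervalIntegrable (fun s => hker c₁ C2 (ρ s) x) volume 0 t := by
    apply ContinuousOn.intervalIntegrable
    rw [uIcc_of_le ht0]; exact (hkcont ρ hρc hρm).mono hsub
  have hχi : IntervalIntegrable (fun s => hker c₁ C2 (ψ s) x) volume 0 t := by
    apply ContinuousOn.intervalIntegrable
    rw [uIcc_of_le ht0]; exact (hkcont ψ hψc hψm).mono hsub
  have hkernn : ∀ (σ : ℝ → Rd d → ℝ), (∀ s ∈ Icc (0:ℝ) T', ∀ y, 0 ≤ σ s y) →
      ∀ s ∈ Icc (0:ℝ) t, 0 ≤ hker c₁ C2 (σ s) x := by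
    intro σ hσnn s hs
    have h := hσnn s (hsub hs)
    refine add_nonneg (mul_nonneg (by norm_num) ?_) hC2nn
    exact integral_nonneg fun y => integral_nonneg fun z =>
      mul_nonneg (add_nonneg (hc₁nn _ _ _) (hc₁nn _ _ _)) (h y)
  have hA0 : 0 ≤ ∫ s in (0:ℝ)..t, hker c₁ C2 (ρ s) x :=
    intervalIntegral.integral_nonneg ht0 (hkernn ρ hρnn)
  have hB0 : 0 ≤ ∫ s in (0:ℝ)..t, hker c₁ C2 (ψ s) x :=
    intervalIntegral.integral_nonneg ht0 (hkernn ψ hψnn)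
  have hABle : |(∫ s in (0:ℝ)..t, hker c₁ C2 (ρ s) x)
      - ∫ s in (0:ℝ)..t, hker c₁ C2 (ψ s) x| ≤ C1 * Real.exp (γ * C2 * t) * N * t := by
    rw [← intervalIntegral.integral_sub hφi hχi]
    have h1 := intervalIntegral.abs_integral_le_integral_abs
      (f := fun s => hker c₁ C2 (ρ s) x - hker c₁ C2 (ψ s) x) (μ := volume) ht0
    have h2 : (∫ s in (0:ℝ)..t, |hker c₁ C2 (ρ s) x - hker c₁ C2 (ψ s) x|)
        ≤ ∫ _s in (0:ℝ)..t, C1 * Real.exp (γ * C2 * t) * N := by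
      refine intervalIntegral.integral_mono_on ht0 ((hφi.sub hχi).abs)
        intervalIntegrable_const fun s hs => ?_
      have hsT : s ∈ Icc (0:ℝ) T' := hsub hs
      have hb := hker_diff_bound c₁ C1 C2 hc₁meas hc₁nn hc₁int₁₃ hc₁int₂₃ hc₁val₁₃ hc₁val₂₃
        x (ρ s) (ψ s) (hρm s hsT) (hψm s hsT) (Real.exp (γ * C2 * s) * N) (hdiffD s hsT)
      refine hb.trans ?_
      have he : Real.exp (γ * C2 * s) ≤ Real.exp (γ * C2 * t) :=
        Real.exp_le_exp.mpr (mul_le_mul_of_nonneg_left hs.2 (mul_nonneg hγ.le hC2nn))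
      calc C1 * (Real.exp (γ * C2 * s) * N) ≤ C1 * (Real.exp (γ * C2 * t) * N) :=
            mul_le_mul_of_nonneg_left (mul_le_mul_of_nonneg_right he hNnn) hC1nn
        _ = C1 * Real.exp (γ * C2 * t) * N := by ring
    have h3 : (∫ _s in (0:ℝ)..t, C1 * Real.exp (γ * C2 * t) * N)
        = C1 * Real.exp (γ * C2 * t) * N * t := by
      rw [intervalIntegral.integral_const]
      simp [smul_eq_mul]; ring
    linarith
  have h1 : |ρ₀ x| ≤ r := (abs_le_linf hρ₀mem.2 x).trans hρ₀r
  have h2 := exp_neg_sub_abs_le hA0 hB0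
  rw [abs_mul]
  calc |ρ₀ x| * |Real.exp (-∫ s in (0:ℝ)..t, hker c₁ C2 (ρ s) x)
        - Real.exp (-∫ s in (0:ℝ)..t, hker c₁ C2 (ψ s) x)|
      ≤ r * (C1 * Real.exp (γ * C2 * t) * N * t) :=
        mul_le_mul h1 (h2.trans hABle) (abs_nonneg _) hr.le
    _ = r * C1 * t * Real.exp (γ * C2 * t) * N := by ring
end
end
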